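/- Let a_n = Σ_{j_1+⋯+j_d ≤ n, j_i ≥ 1} √(j_1+⋯+j_d)/√(j_1⋯j_d). Then lim_{n→∞} a_n / n^{(d+1)/2} = 2π^{d/2} / ((d+1)Γ(d/2)). -/

import Mathlib

open Filter

open Finset MeasureTheory intervalIntegral


noncomputable def gg (a : ℝ) (x : ℝ) : ℝ := x ^ (a - 1) * (1 - x) ^ (-(1/2) : ℝ)

lemma gg_nonneg {a x : ℝ} (hx : 0 ≤ x) (hx1 : x ≤ 1) : 0 ≤ gg a x :=
  mul_nonneg (Real.rpow_nonneg hx _) (Real.rpow_nonneg (by linarith) _)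

lemma gg_intable (a : ℝ) (ha : 0 < a) : IntervalIntegrable (gg a) volume 0 1 := by
  have half1 : IntervalIntegrable (gg a) volume 0 (1/2) := by
    have h1 : IntervalIntegrable (fun x : ℝ => x ^ (a - 1)) volume 0 (1/2) :=
      intervalIntegrable_rpow' (by linarith)
    have h2 : ContinuousOn (fun x : ℝ => (1 - x) ^ (-(1/2) : ℝ)) (Set.uIcc 0 (1/2)) := by
      apply ContinuousOn.rpow_const (by fun_prop)
      intro x hx
      rw [Set.uIcc_of_le (by norm_num)] at hx
      left
      have := hx.2
      intro h; rw [sub_eq_zero] at h; norm_num [← h] at this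
    exact h1.mul_continuousOn h2
  have half2 : IntervalIntegrable (gg a) volume (1/2) 1 := by
    have h1 : IntervalIntegrable (fun x : ℝ => (1 - x) ^ (-(1/2) : ℝ)) volume (1/2) 1 := by
      have := (intervalIntegrable_rpow' (r := -(1/2)) (a := (1/2 : ℝ)) (b := 0)
        (by norm_num)).comp_sub_left 1
      norm_num at this
      exact this
    have h2 : ContinuousOn (fun x : ℝ => x ^ (a - 1)) (Set.uIcc (1/2) 1) := by
      apply ContinuousOn.rpow_const (by fun_prop)
      intro x hx
      rw [Set.uIcc_of_le (by norm_num)] at hx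
      left
      have := hx.1; intro h; rw [h] at this; norm_num at this
    have h3 := h1.mul_continuousOn h2
    have : (fun x : ℝ => (1 - x) ^ (-(1/2) : ℝ) * x ^ (a - 1)) = gg a := by
      funext x; rw [gg, mul_comm]
    rwa [this] at h3
  exact half1.trans half2

lemma gg_intable' (a : ℝ) (ha : 0 < a) {c d : ℝ} (hc : 0 ≤ c) (hc1 : c ≤ 1) (hd : 0 ≤ d)
    (hd1 : d ≤ 1) : IntervalIntegrable (gg a) volume c d :=
  (gg_intable a ha).mono_set (by
    rw [Set.uIcc_of_le (by norm_num : (0:ℝ) ≤ 1)]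
    exact Set.uIcc_subset_Icc ⟨hc, hc1⟩ ⟨hd, hd1⟩)

lemma beta_eval (a b : ℝ) (ha : 0 < a) (hb : 0 < b) :
    ∫ x in (0:ℝ)..1, x ^ (a - 1) * (1 - x) ^ (b - 1)
      = Real.Gamma a * Real.Gamma b / Real.Gamma (a + b) := by
  have key := Complex.Gamma_mul_Gamma_eq_betaIntegral (s := (a : ℂ)) (t := (b : ℂ))
    (by simpa using ha) (by simpa using hb)
  have h2 : Complex.betaIntegral (a : ℂ) (b : ℂ)
      = ((∫ x in (0:ℝ)..1, x ^ (a - 1) * (1 - x) ^ (b - 1) : ℝ) : ℂ) := by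
    rw [Complex.betaIntegral, ← intervalIntegral.integral_ofReal]
    apply intervalIntegral.integral_congr
    intro x hx
    rw [Set.uIcc_of_le (by norm_num)] at hx
    dsimp only
    have e1 : ((a:ℂ) - 1) = ((a - 1 : ℝ) : ℂ) := by push_cast; ring
    have e2 : ((b:ℂ) - 1) = ((b - 1 : ℝ) : ℂ) := by push_cast; ring
    have e3 : (1 - (x:ℂ)) = ((1 - x : ℝ) : ℂ) := by push_cast; ring
    rw [e1, e2, e3, ← Complex.ofReal_cpow hx.1,
      ← Complex.ofReal_cpow (by linarith [hx.2] : (0:ℝ) ≤ 1 - x), ← Complex.ofReal_mul]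
  rw [h2, ← Complex.ofReal_add, Complex.Gamma_ofReal, Complex.Gamma_ofReal,
    Complex.Gamma_ofReal, ← Complex.ofReal_mul, ← Complex.ofReal_mul] at key
  have key' := Complex.ofReal_injective key
  have hΓ : Real.Gamma (a + b) ≠ 0 := (Real.Gamma_pos_of_pos (by linarith)).ne'
  field_simp
  linarith [key']

/-- master upper cell lemma: comparing a Riemann type sum with an integral. -/
lemma sum_div_le_integral (g : ℝ → ℝ) {n a b : ℕ} (o : ℝ) (hn : 0 < n) (hab : a ≤ b)
    (hint : ∀ m : ℕ, a ≤ m → m < b →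
      IntervalIntegrable g volume (((m : ℝ) + o) / n) (((m : ℝ) + 1 + o) / n))
    (hle : ∀ m : ℕ, a ≤ m → m < b →
      ∀ x ∈ Set.Icc (((m : ℝ) + o) / n) (((m : ℝ) + 1 + o) / n), g ((m : ℝ) / n) ≤ g x) :
    (∑ m ∈ Finset.Ico a b, g ((m : ℝ) / n)) / n
      ≤ ∫ x in (((a : ℝ) + o) / n)..(((b : ℝ) + o) / n), g x := by
  have hn' : (0:ℝ) < n := by exact_mod_cast hn
  set c : ℕ → ℝ := fun k => ((a : ℝ) + k + o) / n with hc
  have hcell : ∀ k, c (k + 1) - c k = 1 / n := by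
    intro k
    rw [hc, div_sub_div_same]
    congr 1
    push_cast
    ring
  have h1n : (0:ℝ) < 1 / n := by positivity
  have hmono : ∀ k, c k ≤ c (k + 1) := by
    intro k
    have := hcell k
    linarith
  have hint' : ∀ k < b - a, IntervalIntegrable g volume (c k) (c (k + 1)) := by
    intro k hk
    have h1 : c k = (((a + k : ℕ) : ℝ) + o) / n := by rw [hc]; push_cast; ring_nf
    have h2 : c (k + 1) = (((a + k : ℕ) : ℝ) + 1 + o) / n := by rw [hc]; push_cast; ring_nf
    rw [h1, h2]
    exact hint (a + k) (Nat.le_add_right _ _) (by omega)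
  calc (∑ m ∈ Finset.Ico a b, g ((m : ℝ) / n)) / n
      = ∑ k ∈ Finset.range (b - a), g (((a + k : ℕ) : ℝ) / n) / n := by
        rw [Finset.sum_Ico_eq_sum_range, Finset.sum_div]
    _ ≤ ∑ k ∈ Finset.range (b - a), ∫ x in (c k)..(c (k + 1)), g x := by
        apply Finset.sum_le_sum
        intro k hk
        rw [Finset.mem_range] at hk
        have heq : ∫ x in (c k)..(c (k + 1)), g (((a + k : ℕ) : ℝ) / n)
            = g (((a + k : ℕ) : ℝ) / n) / n := by
          rw [intervalIntegral.integral_const, hcell k, smul_eq_mul]; ring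
        rw [← heq]
        apply intervalIntegral.integral_mono_on (hmono k) intervalIntegrable_const
          (hint' k hk)
        intro x hx
        have h1 : c k = (((a + k : ℕ) : ℝ) + o) / n := by rw [hc]; push_cast; ring_nf
        have h2 : c (k + 1) = (((a + k : ℕ) : ℝ) + 1 + o) / n := by rw [hc]; push_cast; ring_nf
        refine hle (a + k) (Nat.le_add_right _ _) (by omega) x ?_
        rw [← h1, ← h2]; exact hx
    _ = ∫ x in (c 0)..(c (b - a)), g x := intervalIntegral.sum_integral_adjacent_intervals hint'
    _ = ∫ x in (((a : ℝ) + o) / n)..(((b : ℝ) + o) / n), g x := by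
        congr 1
        · rw [hc]; push_cast; ring_nf
        · rw [hc]; push_cast [Nat.cast_sub hab]; ring_nf

lemma integral_le_sum_div (g : ℝ → ℝ) {n a b : ℕ} (o : ℝ) (hn : 0 < n) (hab : a ≤ b)
    (hint : ∀ m : ℕ, a ≤ m → m < b →
      IntervalIntegrable g volume (((m : ℝ) + o) / n) (((m : ℝ) + 1 + o) / n))
    (hle : ∀ m : ℕ, a ≤ m → m < b →
      ∀ x ∈ Set.Icc (((m : ℝ) + o) / n) (((m : ℝ) + 1 + o) / n), g x ≤ g ((m : ℝ) / n)) :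
    (∫ x in (((a : ℝ) + o) / n)..(((b : ℝ) + o) / n), g x)
      ≤ (∑ m ∈ Finset.Ico a b, g ((m : ℝ) / n)) / n := by
  have := sum_div_le_integral (fun x => -g x) o hn hab (fun m h1 h2 => (hint m h1 h2).neg)
    (fun m h1 h2 x hx => neg_le_neg (hle m h1 h2 x hx))
  simp only [intervalIntegral.integral_neg, Finset.sum_neg_distrib, neg_div, neg_le_neg_iff] at this
  exact this

lemma rpow_half_inv {n : ℝ} (hn : 0 < n) : ((1:ℝ)/n) ^ ((1/2):ℝ) = n ^ (-(1/2):ℝ) := by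
  rw [one_div, Real.inv_rpow hn.le, ← Real.rpow_neg hn.le]

lemma rpow_half_inv' {n : ℝ} (hn : 0 < n) : ((1:ℝ)/n) ^ (-(1/2):ℝ) = n ^ ((1/2):ℝ) := by
  rw [one_div, Real.inv_rpow hn.le, ← Real.rpow_neg hn.le, neg_neg]

lemma rpow_half_div {n : ℝ} (hn : 0 < n) : n ^ ((1/2):ℝ) / n = n ^ (-(1/2):ℝ) := by
  rw [div_eq_mul_inv, ← Real.rpow_neg_one (n : ℝ), ← Real.rpow_add hn]
  norm_num

lemma gg_mono {a : ℝ} (ha : 1 ≤ a) {x y : ℝ} (hx : 0 ≤ x) (hxy : x ≤ y) (hy : y < 1) :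
    gg a x ≤ gg a y := by
  unfold gg
  apply mul_le_mul (Real.rpow_le_rpow hx hxy (by linarith))
    (Real.rpow_le_rpow_of_nonpos (by linarith) (by linarith) (by norm_num))
    (Real.rpow_nonneg (by linarith) _) (Real.rpow_nonneg (by linarith) _)

lemma int_tail_right (a : ℝ) (ha : 1 ≤ a) {c : ℝ} (hc : 0 ≤ c) (hc1 : c ≤ 1) :
    ∫ x in c..1, gg a x ≤ 2 * (1 - c) ^ ((1/2):ℝ) := by
  have hint2 : IntervalIntegrable (fun x : ℝ => (1 - x) ^ (-(1/2):ℝ)) volume c 1 := by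
    have := (intervalIntegrable_rpow' (r := -(1/2)) (a := 1 - c) (b := 0)
      (by norm_num)).comp_sub_left 1
    norm_num at this
    exact this
  have h1 : ∫ x in c..1, gg a x ≤ ∫ x in c..1, (1 - x) ^ (-(1/2):ℝ) := by
    apply integral_mono_on hc1 (gg_intable' a (by linarith) hc hc1 (by norm_num) le_rfl) hint2
    intro x hx
    have hx0 : 0 ≤ x := le_trans hc hx.1
    have hx1 : x ≤ 1 := hx.2
    exact mul_le_of_le_one_left (Real.rpow_nonneg (by linarith) _)
      (Real.rpow_le_one hx0 hx1 (by linarith))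
  have h2 : ∫ x in c..1, (1 - x) ^ (-(1/2):ℝ) = 2 * (1 - c) ^ ((1/2):ℝ) := by
    have h3 := integral_comp_sub_left (fun u : ℝ => u ^ (-(1/2):ℝ)) 1 (a := c) (b := 1)
    norm_num at h3
    rw [h3, integral_rpow (Or.inl (by norm_num))]
    norm_num
    ring
  linarith

lemma rpow_neg_half_tendsto : Tendsto (fun n : ℕ => (n:ℝ) ^ (-(1/2):ℝ)) atTop (nhds 0) :=
  (tendsto_rpow_neg_atTop (by norm_num)).comp tendsto_natCast_atTop_atTop

lemma beta_riemann_ge_one (a : ℝ) (ha : 1 ≤ a) :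
    Tendsto (fun n : ℕ => (∑ m ∈ Finset.Ico 1 n, gg a ((m:ℝ)/n)) / n) atTop
      (nhds (∫ x in (0:ℝ)..1, gg a x)) := by
  have ha0 : (0:ℝ) < a := by linarith
  set I := ∫ x in (0:ℝ)..1, gg a x with hI
  apply tendsto_of_tendsto_of_tendsto_of_le_of_le'
    (g := fun n : ℕ => I - 2 * (n:ℝ) ^ (-(1/2):ℝ))
    (h := fun n : ℕ => I + (n:ℝ) ^ (-(1/2):ℝ))
  · simpa using tendsto_const_nhds.sub (rpow_neg_half_tendsto.const_mul 2)
  · simpa using tendsto_const_nhds.add rpow_neg_half_tendsto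
  · -- lower bound
    filter_upwards [eventually_ge_atTop 2] with n hn
    have hn0 : 0 < n := by omega
    have hn' : (0:ℝ) < n := by exact_mod_cast hn0
    have key := integral_le_sum_div (gg a) (n := n) (-1) hn0 (by omega : 1 ≤ n)
      (fun m h1 h2 => by
        apply gg_intable' a ha0
        · apply div_nonneg _ hn'.le
          have : (1:ℝ) ≤ m := by exact_mod_cast h1
          linarith
        · rw [div_le_one hn']
          have : (m:ℝ) ≤ n := by exact_mod_cast le_of_lt h2
          linarith
        · apply div_nonneg _ hn'.le
          have : (1:ℝ) ≤ m := by exact_mod_cast h1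
          linarith
        · rw [div_le_one hn']
          have : (m:ℝ) ≤ n := by exact_mod_cast le_of_lt h2
          linarith)
      (fun m h1 h2 x hx => by
        have hm1 : (1:ℝ) ≤ m := by exact_mod_cast h1
        have hmn : (m:ℝ) + 1 ≤ n := by exact_mod_cast h2
        apply gg_mono ha
        · have := hx.1
          have h0 : (0:ℝ) ≤ ((m:ℝ) + (-1))/n := by
            apply div_nonneg _ hn'.le; linarith
          linarith
        · have := hx.2
          have he : ((m:ℝ) + 1 + (-1))/n = (m:ℝ)/n := by ring
          rw [he] at this
          exact this
        · rw [div_lt_one hn']; linarith)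
    have e1 : (((1:ℕ):ℝ) + (-1))/(n:ℝ) = 0 := by push_cast; ring
    have e2 : ((n:ℝ) + (-1))/(n:ℝ) = ((n:ℝ) - 1)/n := by ring
    rw [e1, e2] at key
    have hn2 : (2:ℝ) ≤ n := by exact_mod_cast hn
    have hc : (0:ℝ) ≤ ((n:ℝ) - 1)/n := by apply div_nonneg _ hn'.le; linarith
    have hc1 : ((n:ℝ) - 1)/n ≤ 1 := by rw [div_le_one hn']; linarith
    have hadd : (∫ x in (0:ℝ)..(((n:ℝ)-1)/n), gg a x) + ∫ x in (((n:ℝ)-1)/n)..1, gg a x = I :=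
      integral_add_adjacent_intervals (gg_intable' a ha0 le_rfl (by norm_num) hc hc1)
        (gg_intable' a ha0 hc hc1 (by norm_num) le_rfl)
    have htail := int_tail_right a ha hc hc1
    have he : (1:ℝ) - ((n:ℝ)-1)/n = 1/n := by field_simp; ring
    rw [he, rpow_half_inv hn'] at htail
    linarith
  · -- upper bound
    filter_upwards [eventually_ge_atTop 2] with n hn
    obtain ⟨p, rfl⟩ : ∃ p, n = p + 2 := ⟨n - 2, by omega⟩
    set n := p + 2 with hnn
    have hn0 : 0 < n := by omega
    have hn' : (0:ℝ) < n := by exact_mod_cast hn0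
    have hsplit : ∑ m ∈ Finset.Ico 1 n, gg a ((m:ℝ)/n)
        = ∑ m ∈ Finset.Ico 1 (p+1), gg a ((m:ℝ)/n) + gg a (((p+1:ℕ):ℝ)/n) := by
      rw [hnn, Finset.sum_Ico_succ_top (by omega)]
    have part1 : (∑ m ∈ Finset.Ico 1 (p+1), gg a ((m:ℝ)/n)) / n
        ≤ ∫ x in (((1:ℕ):ℝ) + 0)/n..((((p+1:ℕ)):ℝ) + 0)/n, gg a x := by
      apply sum_div_le_integral (gg a) (n := n) 0 hn0 (by omega)
      · intro m h1 h2
        apply gg_intable' a ha0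
        · positivity
        · rw [div_le_one hn']
          have : (m:ℝ) + 1 ≤ n := by
            have : (m:ℝ) < p + 1 := by exact_mod_cast h2
            push_cast [hnn]; linarith
          linarith
        · positivity
        · rw [div_le_one hn']
          have : (m:ℝ) + 1 ≤ n := by
            have : (m:ℝ) < p + 1 := by exact_mod_cast h2
            push_cast [hnn]; linarith
          linarith
      · intro m h1 h2 x hx
        have hm0 : (0:ℝ) ≤ m := by positivity
        have hmp : (m:ℝ) + 1 ≤ p + 1 := by exact_mod_cast h2
        apply gg_mono ha (by positivity)
        · have := hx.1
          have he : ((m:ℝ) + 0)/n = (m:ℝ)/n := by ring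
          rw [he] at this
          exact this
        · have := hx.2
          have hlt : ((m:ℝ) + 1 + 0)/n < 1 := by
            rw [div_lt_one hn']
            push_cast [hnn]
            linarith
          linarith
    have part1' : ∫ x in (((1:ℕ):ℝ) + 0)/n..((((p+1:ℕ)):ℝ) + 0)/n, gg a x ≤ I := by
      apply integral_mono_interval (a := (((1:ℕ):ℝ) + 0)/n) (c := (0:ℝ)) (d := (1:ℝ))
      · positivity
      · apply (div_le_div_iff_of_pos_right hn').mpr
        push_cast
        linarith
      · rw [div_le_one hn']
        push_cast [hnn]
        linarith
      · filter_upwards [ae_restrict_mem measurableSet_Ioc] with x hx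
        simpa using gg_nonneg hx.1.le hx.2
      · exact gg_intable a ha0
    have part2 : gg a (((p+1:ℕ):ℝ)/n) / n ≤ (n:ℝ) ^ (-(1/2):ℝ) := by
      have hb1 : ((p+1:ℕ):ℝ)/n ≤ 1 := by
        rw [div_le_one hn']; push_cast [hnn]; linarith
      have hb0 : (0:ℝ) ≤ ((p+1:ℕ):ℝ)/n := by positivity
      have hgg : gg a (((p+1:ℕ):ℝ)/n) ≤ (n:ℝ) ^ ((1/2):ℝ) := by
        unfold gg
        have hfac : (1:ℝ) - ((p+1:ℕ):ℝ)/n = 1/n := by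
          push_cast [hnn]; field_simp; ring
        rw [hfac, rpow_half_inv' hn']
        exact mul_le_of_le_one_left (Real.rpow_nonneg (by positivity) _)
          (Real.rpow_le_one hb0 hb1 (by linarith))
      calc gg a (((p+1:ℕ):ℝ)/n) / n ≤ (n:ℝ) ^ ((1/2):ℝ) / n := by gcongr
        _ = (n:ℝ) ^ (-(1/2):ℝ) := rpow_half_div hn'
    calc (∑ m ∈ Finset.Ico 1 n, gg a ((m:ℝ)/n)) / n
        = (∑ m ∈ Finset.Ico 1 (p+1), gg a ((m:ℝ)/n)) / n + gg a (((p+1:ℕ):ℝ)/n) / n := by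
          rw [hsplit, add_div]
      _ ≤ I + (n:ℝ) ^ (-(1/2):ℝ) := by
          have := part1.trans part1'
          linarith

lemma gg_half_def (x : ℝ) : gg (1/2) x = x ^ (-(1/2):ℝ) * (1-x) ^ (-(1/2):ℝ) := by
  rw [gg]; norm_num

lemma gg_half_eq {x : ℝ} (hx : 0 ≤ x) (hx1 : x ≤ 1) :
    gg (1/2) x = (x * (1 - x)) ^ (-(1/2):ℝ) := by
  rw [gg_half_def, ← Real.mul_rpow hx (by linarith)]

lemma gg_half_symm (x : ℝ) : gg (1/2) (1 - x) = gg (1/2) x := by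
  rw [gg_half_def, gg_half_def, sub_sub_cancel, mul_comm]

lemma gg_half_anti {x y : ℝ} (hx : 0 < x) (hxy : x ≤ y) (hy : y ≤ 1/2) :
    gg (1/2) y ≤ gg (1/2) x := by
  rw [gg_half_eq (by linarith) (by linarith), gg_half_eq hx.le (by linarith)]
  exact Real.rpow_le_rpow_of_nonpos (by nlinarith) (by nlinarith) (by norm_num)

lemma gg_half_bound3 {x : ℝ} (hx : 1/4 ≤ x) (hx2 : x ≤ 1/2) : gg (1/2) x ≤ 3 := by
  rw [gg_half_eq (by linarith) (by linarith)]
  have h1 : (x * (1 - x)) ^ (-(1/2):ℝ) ≤ ((1:ℝ)/8) ^ (-(1/2):ℝ) :=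
    Real.rpow_le_rpow_of_nonpos (by norm_num) (by nlinarith) (by norm_num)
  have h2 : ((1:ℝ)/8) ^ (-(1/2):ℝ) = (8:ℝ) ^ ((1/2):ℝ) := rpow_half_inv' (by norm_num)
  have h3 : ((8:ℝ) ^ ((1/2):ℝ)) ^ (2:ℕ) = 8 := by
    rw [← Real.rpow_natCast ((8:ℝ) ^ ((1/2):ℝ)) 2, ← Real.rpow_mul (by norm_num)]
    norm_num
  nlinarith [Real.rpow_nonneg (show (0:ℝ) ≤ 8 by norm_num) ((1/2):ℝ), h3, h1, h2]

lemma int_tail_left_half {c : ℝ} (hc : 0 ≤ c) (hc2 : c ≤ 1/2) :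
    ∫ x in (0:ℝ)..c, gg (1/2) x ≤ 2 * (2:ℝ) ^ ((1/2):ℝ) * c ^ ((1/2):ℝ) := by
  have hint2 : IntervalIntegrable (fun x : ℝ => x ^ (-(1/2):ℝ) * (2:ℝ) ^ ((1/2):ℝ))
      volume 0 c := (intervalIntegrable_rpow' (by norm_num)).mul_const _
  have h1 : ∫ x in (0:ℝ)..c, gg (1/2) x
      ≤ ∫ x in (0:ℝ)..c, x ^ (-(1/2):ℝ) * (2:ℝ) ^ ((1/2):ℝ) := by
    apply integral_mono_on hc (gg_intable' (1/2) (by norm_num) le_rfl (by norm_num) hc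
      (by linarith)) hint2
    intro x hx
    rw [gg_half_def]
    apply mul_le_mul_of_nonneg_left _ (Real.rpow_nonneg hx.1 _)
    calc (1 - x) ^ (-(1/2):ℝ) ≤ ((1:ℝ)/2) ^ (-(1/2):ℝ) :=
          Real.rpow_le_rpow_of_nonpos (by norm_num) (by linarith [hx.2]) (by norm_num)
      _ = (2:ℝ) ^ ((1/2):ℝ) := rpow_half_inv' (by norm_num)
  have h2 : ∫ x in (0:ℝ)..c, x ^ (-(1/2):ℝ) * (2:ℝ) ^ ((1/2):ℝ)
      = 2 * (2:ℝ) ^ ((1/2):ℝ) * c ^ ((1/2):ℝ) := by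
    rw [intervalIntegral.integral_mul_const, integral_rpow (Or.inl (by norm_num))]
    norm_num
    ring
  linarith

lemma sum_reflect (n K : ℕ) (hK : K < n) :
    ∑ m ∈ Finset.Ico (K+1) n, gg (1/2) ((m:ℝ)/n)
      = ∑ m ∈ Finset.Ico 1 (n - K), gg (1/2) ((m:ℝ)/n) := by
  have hn' : (0:ℝ) < n := by
    have : 0 < n := by omega
    exact_mod_cast this
  refine Finset.sum_nbij' (fun m => n - m) (fun m => n - m) ?_ ?_ ?_ ?_ ?_
  · intro m hm
    rw [Finset.mem_Ico] at hm ⊢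
    omega
  · intro m hm
    rw [Finset.mem_Ico] at hm ⊢
    omega
  · intro m hm
    rw [Finset.mem_Ico] at hm
    omega
  · intro m hm
    rw [Finset.mem_Ico] at hm
    omega
  · intro m hm
    rw [Finset.mem_Ico] at hm
    have hmn : m ≤ n := by omega
    rw [Nat.cast_sub hmn]
    rw [show ((n:ℝ) - m)/n = 1 - (m:ℝ)/n by field_simp, gg_half_symm]

lemma half_upper (n M : ℕ) (hn : 2 ≤ n) (hM1 : 1 ≤ M) (hM : M ≤ n/2 + 1) :
    (∑ m ∈ Finset.Ico 1 M, gg (1/2) ((m:ℝ)/n))/n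
      ≤ gg (1/2) (1/n)/n + ∫ x in (0:ℝ)..(1/2:ℝ), gg (1/2) x := by
  have hn0 : 0 < n := by omega
  have hn' : (0:ℝ) < n := by exact_mod_cast hn0
  have hInonneg : 0 ≤ ∫ x in (0:ℝ)..(1/2:ℝ), gg (1/2) x := by
    apply intervalIntegral.integral_nonneg (by norm_num)
    intro x hx
    exact gg_nonneg hx.1 (by linarith [hx.2])
  rcases eq_or_lt_of_le hM1 with h1 | h1
  · rw [← h1]
    simp only [Finset.Ico_self, Finset.sum_empty, zero_div]
    have : 0 ≤ gg (1/2) (1/(n:ℝ))/n := by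
      apply div_nonneg _ hn'.le
      apply gg_nonneg (by positivity)
      rw [div_le_one hn']
      exact_mod_cast hn0
    linarith
  · rw [Finset.sum_eq_sum_Ico_succ_bot h1, add_div]
    have key : (∑ m ∈ Finset.Ico 2 M, gg (1/2) ((m:ℝ)/n))/n
        ≤ ∫ x in (((2:ℕ):ℝ) + (-1))/n..(((M:ℕ):ℝ) + (-1))/n, gg (1/2) x := by
      apply sum_div_le_integral _ (-1) hn0 h1
      · intro m h2 h3
        have hm2 : (2:ℝ) ≤ m := by exact_mod_cast h2
        have hmM : (m:ℝ) < M := by exact_mod_cast h3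
        have hMn : (M:ℝ) ≤ (n:ℝ)/2 + 1 := by
          have h4 : 2 * M ≤ n + 2 := by omega
          have : (2:ℝ) * M ≤ (n:ℝ) + 2 := by exact_mod_cast h4
          linarith
        apply gg_intable' (1/2) (by norm_num)
        · apply div_nonneg _ hn'.le; linarith
        · rw [div_le_one hn']; linarith
        · apply div_nonneg _ hn'.le; linarith
        · rw [div_le_one hn']; linarith
      · intro m h2 h3 x hx
        have hm2 : (2:ℝ) ≤ m := by exact_mod_cast h2
        have hmM : (m:ℝ) < M := by exact_mod_cast h3
        have hmhalf : (m:ℝ)/n ≤ 1/2 := by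
          rw [div_le_div_iff₀ hn' (by norm_num)]
          have h4 : 2 * m ≤ n := by omega
          have : (2:ℝ) * m ≤ n := by exact_mod_cast h4
          linarith
        apply gg_half_anti
        · have := hx.1
          have h0 : (0:ℝ) < ((m:ℝ) + (-1))/n := by
            apply div_pos _ hn'; linarith
          linarith
        · have := hx.2
          have he : ((m:ℝ) + 1 + (-1))/n = (m:ℝ)/n := by ring
          rw [he] at this
          exact this
        · exact hmhalf
    have key2 : ∫ x in (((2:ℕ):ℝ) + (-1))/n..(((M:ℕ):ℝ) + (-1))/n, gg (1/2) x
        ≤ ∫ x in (0:ℝ)..(1/2:ℝ), gg (1/2) x := by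
      apply integral_mono_interval
      · positivity
      · apply (div_le_div_iff_of_pos_right hn').mpr
        have : (1:ℝ) ≤ M - 1 := by
          have : (2:ℝ) ≤ M := by exact_mod_cast h1
          linarith
        push_cast
        linarith
      · have h4 : 2 * M ≤ n + 2 := by omega
        have h5 : (2:ℝ) * M ≤ (n:ℝ) + 2 := by exact_mod_cast h4
        rw [div_le_div_iff₀ hn' (by norm_num)]
        push_cast
        linarith
      · filter_upwards [ae_restrict_mem measurableSet_Ioc] with x hx
        simpa using gg_nonneg hx.1.le (by linarith [hx.2])
      · exact gg_intable' (1/2) (by norm_num) (by norm_num) (by norm_num) (by norm_num)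
          (by norm_num)
    have hbot : gg (1/2) (((1:ℕ):ℝ)/n) = gg (1/2) (1/(n:ℝ)) := by norm_num
    rw [hbot]
    linarith

lemma half_lower (n M : ℕ) (hn : 4 ≤ n) (hM : n/2 ≤ M) (hM2 : M ≤ n) :
    (∫ x in (0:ℝ)..(1/2:ℝ), gg (1/2) x) - 3/(n:ℝ) - 2 * (2:ℝ)^((1/2):ℝ) * (n:ℝ)^(-(1/2):ℝ)
      ≤ (∑ m ∈ Finset.Ico 1 M, gg (1/2) ((m:ℝ)/n))/n := by
  have hn0 : 0 < n := by omega
  have hn' : (0:ℝ) < n := by exact_mod_cast hn0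
  set K := n/2 with hK
  have hKn : (K:ℝ)/n ≤ 1/2 := by
    rw [div_le_div_iff₀ hn' (by norm_num)]
    have h4 : 2 * K ≤ n := by omega
    have : (2:ℝ) * K ≤ n := by exact_mod_cast h4
    linarith
  have hK4 : (1:ℝ)/4 ≤ (K:ℝ)/n := by
    rw [div_le_div_iff₀ (by norm_num) hn']
    have h4 : n ≤ 4 * K := by omega
    have : (n:ℝ) ≤ 4 * K := by exact_mod_cast h4
    linarith
  have hKn1 : (0:ℝ) ≤ (K:ℝ)/n := by positivity
  -- step 1 : subset monotonicity
  have step1 : (∑ m ∈ Finset.Ico 1 K, gg (1/2) ((m:ℝ)/n))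
      ≤ ∑ m ∈ Finset.Ico 1 M, gg (1/2) ((m:ℝ)/n) := by
    apply Finset.sum_le_sum_of_subset_of_nonneg
    · apply Finset.Ico_subset_Ico le_rfl hM
    · intro m hm _
      rw [Finset.mem_Ico] at hm
      apply gg_nonneg (by positivity)
      rw [div_le_one hn']
      have : (m:ℝ) ≤ M := by exact_mod_cast le_of_lt hm.2
      have hMn : (M:ℝ) ≤ n := by exact_mod_cast hM2
      linarith
  -- step 2 : integral lower bound for the K-sum
  have step2 : ∫ x in (((1:ℕ):ℝ) + 0)/n..(((K:ℕ):ℝ) + 0)/n, gg (1/2) x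
      ≤ (∑ m ∈ Finset.Ico 1 K, gg (1/2) ((m:ℝ)/n))/n := by
    apply integral_le_sum_div _ 0 hn0 (by omega)
    · intro m h1 h2
      have hm1 : (1:ℝ) ≤ m := by exact_mod_cast h1
      have hmK : (m:ℝ) + 1 ≤ K := by exact_mod_cast h2
      apply gg_intable' (1/2) (by norm_num)
      · positivity
      · rw [div_le_one hn']
        have : (K:ℝ) ≤ n := by exact_mod_cast (show K ≤ n by omega)
        linarith
      · positivity
      · rw [div_le_one hn']
        have : (K:ℝ) ≤ n := by
          have : K ≤ n := by omega
          exact_mod_cast this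
        linarith
    · intro m h1 h2 x hx
      have hm1 : (1:ℝ) ≤ m := by exact_mod_cast h1
      have hmK : (m:ℝ) + 1 ≤ K := by exact_mod_cast h2
      have hx1 : (m:ℝ)/n ≤ x := by
        have := hx.1
        have he : ((m:ℝ) + 0)/n = (m:ℝ)/n := by ring
        rw [he] at this
        exact this
      have hx2 : x ≤ 1/2 := by
        have := hx.2
        have h5 : ((m:ℝ) + 1 + 0)/n ≤ (K:ℝ)/n := by
          apply (div_le_div_iff_of_pos_right hn').mpr
          linarith
        linarith [hKn]
      apply gg_half_anti (by positivity) hx1 hx2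
  -- step 3 : decompose the integral
  have int1 : IntervalIntegrable (gg (1/2)) volume 0 (1/(n:ℝ)) := by
    apply gg_intable' (1/2) (by norm_num) le_rfl (by norm_num) (by positivity)
    rw [div_le_one hn']
    have : (1:ℝ) ≤ n := by exact_mod_cast hn0
    linarith
  have hinv_half : 1/(n:ℝ) ≤ 1/2 := by
    rw [div_le_div_iff₀ hn' (by norm_num)]
    have : (4:ℝ) ≤ n := by exact_mod_cast hn
    linarith
  have hinvK : 1/(n:ℝ) ≤ (K:ℝ)/n := by
    apply (div_le_div_iff_of_pos_right hn').mpr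
    have : (1:ℕ) ≤ K := by omega
    exact_mod_cast this
  have int2 : IntervalIntegrable (gg (1/2)) volume (1/(n:ℝ)) ((K:ℝ)/n) :=
    gg_intable' (1/2) (by norm_num) (by positivity) (by linarith) hKn1 (by linarith)
  have int3 : IntervalIntegrable (gg (1/2)) volume ((K:ℝ)/n) (1/2) :=
    gg_intable' (1/2) (by norm_num) hKn1 (by linarith) (by norm_num) (by norm_num)
  have hadd1 : (∫ x in (0:ℝ)..(1/(n:ℝ)), gg (1/2) x) + ∫ x in (1/(n:ℝ))..((K:ℝ)/n), gg (1/2) x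
      = ∫ x in (0:ℝ)..((K:ℝ)/n), gg (1/2) x := integral_add_adjacent_intervals int1 int2
  have hadd2 : (∫ x in (0:ℝ)..((K:ℝ)/n), gg (1/2) x) + ∫ x in ((K:ℝ)/n)..(1/2:ℝ), gg (1/2) x
      = ∫ x in (0:ℝ)..(1/2:ℝ), gg (1/2) x :=
    integral_add_adjacent_intervals (int1.trans int2) int3
  -- step 4 : bound the two tails
  have tail1 : ∫ x in (0:ℝ)..(1/(n:ℝ)), gg (1/2) x
      ≤ 2 * (2:ℝ)^((1/2):ℝ) * (n:ℝ)^(-(1/2):ℝ) := by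
    have := int_tail_left_half (c := 1/(n:ℝ)) (by positivity) hinv_half
    rwa [rpow_half_inv hn'] at this
  have tail2 : ∫ x in ((K:ℝ)/n)..(1/2:ℝ), gg (1/2) x ≤ 3/(n:ℝ) := by
    have hb : ∫ x in ((K:ℝ)/n)..(1/2:ℝ), gg (1/2) x ≤ ∫ x in ((K:ℝ)/n)..(1/2:ℝ), (3:ℝ) := by
      apply integral_mono_on (by linarith) int3 intervalIntegrable_const
      intro x hx
      exact gg_half_bound3 (le_trans hK4 hx.1) hx.2
    rw [intervalIntegral.integral_const, smul_eq_mul] at hb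
    have hKclose : 1/2 - (K:ℝ)/n ≤ 1/(n:ℝ) := by
      rw [div_sub_div _ _ (by norm_num : (2:ℝ) ≠ 0) hn'.ne', div_le_div_iff₀ (by positivity) hn']
      have h6 : n ≤ 2 * K + 1 := by omega
      have : (n:ℝ) ≤ 2 * K + 1 := by exact_mod_cast h6
      nlinarith
    have e3 : (3:ℝ)/n = 3 * (1/(n:ℝ)) := by ring
    linarith
  -- combine
  have e1 : (((1:ℕ):ℝ) + 0)/n = 1/(n:ℝ) := by norm_num
  have e2 : (((K:ℕ):ℝ) + 0)/n = (K:ℝ)/n := by norm_num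
  rw [e1, e2] at step2
  have : (∑ m ∈ Finset.Ico 1 K, gg (1/2) ((m:ℝ)/n))/n
      ≤ (∑ m ∈ Finset.Ico 1 M, gg (1/2) ((m:ℝ)/n))/n := by
    exact (div_le_div_iff_of_pos_right hn').mpr step1
  linarith

lemma beta_riemann_half :
    Tendsto (fun n : ℕ => (∑ m ∈ Finset.Ico 1 n, gg (1/2) ((m:ℝ)/n)) / n) atTop
      (nhds (∫ x in (0:ℝ)..1, gg (1/2) x)) := by
  have int_left : IntervalIntegrable (gg (1/2)) volume 0 (1/2) :=
    gg_intable' (1/2) (by norm_num) le_rfl (by norm_num) (by norm_num) (by norm_num)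
  have int_right : IntervalIntegrable (gg (1/2)) volume (1/2) 1 :=
    gg_intable' (1/2) (by norm_num) (by norm_num) (by norm_num) (by norm_num) le_rfl
  have hrefl : ∫ x in (1/2:ℝ)..1, gg (1/2) x = ∫ x in (0:ℝ)..(1/2:ℝ), gg (1/2) x := by
    have h := integral_comp_sub_left (gg (1/2)) 1 (a := (1/2:ℝ)) (b := (1:ℝ))
    have h2 : ∫ x in (1/2:ℝ)..1, gg (1/2) x = ∫ x in (1/2:ℝ)..1, gg (1/2) (1 - x) :=
      intervalIntegral.integral_congr (fun x _ => (gg_half_symm x).symm)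
    rw [h2, h]
    norm_num
  have hI2 : ∫ x in (0:ℝ)..1, gg (1/2) x = 2 * ∫ x in (0:ℝ)..(1/2:ℝ), gg (1/2) x := by
    rw [← integral_add_adjacent_intervals int_left int_right, hrefl]; ring
  set Ih := ∫ x in (0:ℝ)..(1/2:ℝ), gg (1/2) x with hIh
  have t1 : Tendsto (fun n : ℕ => (6:ℝ)/(n:ℝ)) atTop (nhds 0) :=
    tendsto_const_div_atTop_nhds_zero_nat 6
  have t2 := rpow_neg_half_tendsto
  rw [hI2]
  apply tendsto_of_tendsto_of_tendsto_of_le_of_le'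
    (g := fun n : ℕ => 2*Ih - 6/(n:ℝ) - 4*(2:ℝ)^((1/2):ℝ)*(n:ℝ)^(-(1/2):ℝ))
    (h := fun n : ℕ => 2*Ih + 2*((2:ℝ)^((1/2):ℝ)*(n:ℝ)^(-(1/2):ℝ)))
  · have := (tendsto_const_nhds (x := 2*Ih) (f := atTop (α := ℕ))).sub t1 |>.sub
      ((t2.const_mul ((2:ℝ)^((1/2):ℝ))).const_mul 4)
    simpa [mul_assoc] using this
  · have := (tendsto_const_nhds (x := 2*Ih) (f := atTop (α := ℕ))).add
      ((t2.const_mul ((2:ℝ)^((1/2):ℝ))).const_mul 2)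
    simpa [mul_assoc] using this
  · filter_upwards [eventually_ge_atTop 4] with n hn
    have hn0 : 0 < n := by omega
    have hn' : (0:ℝ) < n := by exact_mod_cast hn0
    set K := n/2 with hK
    have hsplit : ∑ m ∈ Finset.Ico 1 (K+1), gg (1/2) ((m:ℝ)/n)
        + ∑ m ∈ Finset.Ico (K+1) n, gg (1/2) ((m:ℝ)/n)
        = ∑ m ∈ Finset.Ico 1 n, gg (1/2) ((m:ℝ)/n) :=
      Finset.sum_Ico_consecutive _ (by omega) (by omega)
    have hrefl2 := sum_reflect n K (by omega)
    have hA := half_lower n (K+1) hn (by omega) (by omega)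
    have hB := half_lower n (n-K) hn (by omega) (by omega)
    rw [hrefl2] at hsplit
    rw [← hsplit, add_div]
    rw [← hIh] at hA hB
    have hsum := add_le_add hA hB
    have hring : 2*Ih - 6/(n:ℝ) - 4*(2:ℝ)^((1/2):ℝ)*(n:ℝ)^(-(1/2):ℝ)
        = (Ih - 3/(n:ℝ) - 2*(2:ℝ)^((1/2):ℝ)*(n:ℝ)^(-(1/2):ℝ))
          + (Ih - 3/(n:ℝ) - 2*(2:ℝ)^((1/2):ℝ)*(n:ℝ)^(-(1/2):ℝ)) := by ring
    rw [hring]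
    exact hsum
  · filter_upwards [eventually_ge_atTop 4] with n hn
    have hn0 : 0 < n := by omega
    have hn' : (0:ℝ) < n := by exact_mod_cast hn0
    set K := n/2 with hK
    have hsplit : ∑ m ∈ Finset.Ico 1 (K+1), gg (1/2) ((m:ℝ)/n)
        + ∑ m ∈ Finset.Ico (K+1) n, gg (1/2) ((m:ℝ)/n)
        = ∑ m ∈ Finset.Ico 1 n, gg (1/2) ((m:ℝ)/n) :=
      Finset.sum_Ico_consecutive _ (by omega) (by omega)
    have hrefl2 := sum_reflect n K (by omega)
    have hA := half_upper n (K+1) (by omega) (by omega) (by omega)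
    have hB := half_upper n (n-K) (by omega) (by omega) (by omega)
    rw [hrefl2] at hsplit
    rw [← hsplit, add_div]
    have hg : gg (1/2) (1/(n:ℝ))/n ≤ (2:ℝ)^((1/2):ℝ) * (n:ℝ)^(-(1/2):ℝ) := by
      have hgb : gg (1/2) (1/(n:ℝ)) ≤ (2:ℝ)^((1/2):ℝ) * (n:ℝ)^((1/2):ℝ) := by
        rw [gg_half_def, rpow_half_inv' hn']
        rw [mul_comm ((2:ℝ)^((1/2):ℝ)) ((n:ℝ)^((1/2):ℝ))]
        apply mul_le_mul_of_nonneg_left _ (Real.rpow_nonneg hn'.le _)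
        calc (1 - 1/(n:ℝ)) ^ (-(1/2):ℝ) ≤ ((1:ℝ)/2) ^ (-(1/2):ℝ) := by
              apply Real.rpow_le_rpow_of_nonpos (by norm_num) _ (by norm_num)
              have h2 : (2:ℝ) ≤ n := by
                have : (4:ℝ) ≤ n := by exact_mod_cast hn
                linarith
              have h3 : 1/(n:ℝ) ≤ 1/2 := by
                rw [div_le_div_iff₀ hn' (by norm_num)]
                linarith
              linarith
          _ = (2:ℝ) ^ ((1/2):ℝ) := rpow_half_inv' (by norm_num)
      calc gg (1/2) (1/(n:ℝ))/n ≤ ((2:ℝ)^((1/2):ℝ) * (n:ℝ)^((1/2):ℝ))/n := by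
            apply (div_le_div_iff_of_pos_right hn').mpr hgb
        _ = (2:ℝ)^((1/2):ℝ) * ((n:ℝ)^((1/2):ℝ)/n) := by ring
        _ = (2:ℝ)^((1/2):ℝ) * (n:ℝ)^(-(1/2):ℝ) := by rw [rpow_half_div hn']
    rw [← hIh] at hA hB
    linarith

lemma beta_riemann (a : ℝ) (ha : a = 1/2 ∨ 1 ≤ a) :
    Tendsto (fun n : ℕ => (∑ m ∈ Finset.Ico 1 n, gg a ((m:ℝ)/n)) / n) atTop
      (nhds (∫ x in (0:ℝ)..1, gg a x)) := by
  rcases ha with rfl | h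
  · exact beta_riemann_half
  · exact beta_riemann_ge_one a h

lemma beta_sum_lim (a : ℝ) (ha : a = 1/2 ∨ 1 ≤ a) :
    Tendsto (fun n : ℕ => (∑ m ∈ Finset.Ico 1 n,
        (m:ℝ)^(a-1) * ((n:ℝ)-(m:ℝ))^(-(1/2):ℝ)) / (n:ℝ)^(a - 1/2)) atTop
      (nhds (Real.Gamma a * Real.Gamma (1/2) / Real.Gamma (a + 1/2))) := by
  have ha0 : 0 < a := by rcases ha with h | h <;> linarith [h]
  have hval : ∫ x in (0:ℝ)..1, gg a x
      = Real.Gamma a * Real.Gamma (1/2) / Real.Gamma (a + 1/2) := by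
    rw [← beta_eval a (1/2) ha0 (by norm_num)]
    apply intervalIntegral.integral_congr
    intro x _
    rw [gg]
    norm_num
  have h0 := beta_riemann a ha
  rw [hval] at h0
  apply Tendsto.congr' _ h0
  filter_upwards [eventually_ge_atTop 1] with n hn
  have hn' : (0:ℝ) < n := by exact_mod_cast (show 0 < n by omega)
  have term : ∀ m ∈ Finset.Ico 1 n, gg a ((m:ℝ)/n)
      = ((m:ℝ)^(a-1) * ((n:ℝ)-(m:ℝ))^(-(1/2):ℝ)) * (((n:ℝ)^(a - 1/2))⁻¹ * n) := by
    intro m hm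
    rw [Finset.mem_Ico] at hm
    have hm1 : (1:ℝ) ≤ m := by exact_mod_cast hm.1
    have hmn : (m:ℝ) < n := by exact_mod_cast hm.2
    rw [gg, show (1:ℝ) - (m:ℝ)/n = ((n:ℝ)-m)/n by field_simp,
      Real.div_rpow (by positivity) hn'.le, Real.div_rpow (by linarith) hn'.le,
      div_mul_div_comm, ← Real.rpow_add hn']
    have hexp : (n:ℝ)^(a - 1 + -(1/2)) = (n:ℝ)^(a - 1/2) * (n:ℝ)^(-1:ℝ) := by
      rw [← Real.rpow_add hn']
      congr 1
      ring
    rw [hexp, div_eq_mul_inv, mul_inv, Real.rpow_neg_one, inv_inv]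
    try ring
  rw [Finset.sum_congr rfl term, ← Finset.sum_mul]
  have hne : ((n:ℝ)^(a - 1/2)) ≠ 0 := by positivity
  field_simp

lemma weighted_null (w : ℕ → ℕ → ℝ) (e : ℕ → ℝ) (C : ℝ)
    (hw : ∀ n, ∀ k ∈ Finset.range n, 0 ≤ w n k)
    (hwk : ∀ k, Tendsto (fun n => w n k) atTop (nhds 0))
    (hC : ∀ n, ∑ k ∈ Finset.range n, w n k ≤ C)
    (he0 : ∀ k, 0 ≤ e k) (he : Tendsto e atTop (nhds 0)) :
    Tendsto (fun n => ∑ k ∈ Finset.range n, w n k * e k) atTop (nhds 0) := by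
  have hC0 : (0:ℝ) < C + 1 := by
    have h1 := hC 1
    have h2 := hw 1 0 (by simp)
    simp at h1
    linarith
  rw [Metric.tendsto_atTop]
  intro ε hε
  have hεC : 0 < ε / (2 * (C + 1)) := by positivity
  obtain ⟨M, hM⟩ := Metric.tendsto_atTop.mp he (ε / (2 * (C + 1))) hεC
  have hfin : Tendsto (fun n => ∑ k ∈ Finset.range M, w n k * e k) atTop (nhds 0) := by
    have h := tendsto_finset_sum (f := fun k n => w n k * e k) (x := atTop)
      (a := fun _ => 0) (Finset.range M) (fun k _ => by simpa using (hwk k).mul_const (e k))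
    simpa using h
  obtain ⟨N, hN⟩ := Metric.tendsto_atTop.mp hfin (ε/2) (by positivity)
  refine ⟨max M N, fun n hn => ?_⟩
  have hnM : M ≤ n := le_trans (le_max_left _ _) hn
  have hnN : N ≤ n := le_trans (le_max_right _ _) hn
  have hsplit : ∑ k ∈ Finset.range M, w n k * e k + ∑ k ∈ Finset.Ico M n, w n k * e k
      = ∑ k ∈ Finset.range n, w n k * e k := by
    rw [Finset.range_eq_Ico, Finset.range_eq_Ico]
    exact Finset.sum_Ico_consecutive (fun k => w n k * e k) (Nat.zero_le _) hnM
  have hb1 : |∑ k ∈ Finset.range M, w n k * e k| < ε/2 := by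
    have := hN n hnN
    rwa [Real.dist_eq, sub_zero] at this
  have hb2 : ∑ k ∈ Finset.Ico M n, w n k * e k ≤ ε / (2 * (C + 1)) * C := by
    calc ∑ k ∈ Finset.Ico M n, w n k * e k
        ≤ ∑ k ∈ Finset.Ico M n, w n k * (ε / (2 * (C + 1))) := by
          apply Finset.sum_le_sum
          intro k hk
          rw [Finset.mem_Ico] at hk
          apply mul_le_mul_of_nonneg_left _ (hw n k (by simp [Finset.mem_range]; omega))
          have := hM k hk.1
          rw [Real.dist_eq, sub_zero] at this
          exact le_of_lt (lt_of_abs_lt this)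
      _ = (∑ k ∈ Finset.Ico M n, w n k) * (ε / (2 * (C + 1))) := by
          rw [Finset.sum_mul]
      _ ≤ C * (ε / (2 * (C + 1))) := by
          apply mul_le_mul_of_nonneg_right _ hεC.le
          calc ∑ k ∈ Finset.Ico M n, w n k
              ≤ ∑ k ∈ Finset.range n, w n k := by
                apply Finset.sum_le_sum_of_subset_of_nonneg
                · rw [Finset.range_eq_Ico]
                  exact Finset.Ico_subset_Ico (Nat.zero_le _) le_rfl
                · intro k hk _
                  exact hw n k hk
            _ ≤ C := hC n
      _ = ε / (2 * (C + 1)) * C := by ring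
  have hb2' : ∑ k ∈ Finset.Ico M n, w n k * e k ≥ 0 := by
    apply Finset.sum_nonneg
    intro k hk
    rw [Finset.mem_Ico] at hk
    exact mul_nonneg (hw n k (by simp [Finset.mem_range]; omega)) (he0 k)
  rw [Real.dist_eq, sub_zero, ← hsplit]
  have hC2 : ε / (2 * (C + 1)) * C < ε/2 := by
    rw [div_mul_eq_mul_div, div_lt_iff₀ (by linarith : (0:ℝ) < 2*(C+1))]
    nlinarith
  calc |∑ k ∈ Finset.range M, w n k * e k + ∑ k ∈ Finset.Ico M n, w n k * e k|
      ≤ |∑ k ∈ Finset.range M, w n k * e k| + |∑ k ∈ Finset.Ico M n, w n k * e k| :=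
        abs_add_le _ _
    _ < ε/2 + ε/2 := by
        apply add_lt_add_of_lt_of_le hb1
        rw [abs_of_nonneg hb2']
        linarith
    _ = ε := by ring

noncomputable def TT (d k : ℕ) : ℝ :=
  ∑ j ∈ (Fintype.piFinset fun _ : Fin d => Finset.Icc 1 k).filter (fun j => ∑ i, j i = k),
    (Real.sqrt (∏ i, (j i : ℝ)))⁻¹

lemma fiber_eq (d k N : ℕ) (h : k ≤ N) :
    (Fintype.piFinset fun _ : Fin d => Finset.Icc 1 N).filter (fun j => ∑ i, j i = k)
      = (Fintype.piFinset fun _ : Fin d => Finset.Icc 1 k).filter (fun j => ∑ i, j i = k) := by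
  ext j
  simp only [mem_filter, Fintype.mem_piFinset, Finset.mem_Icc]
  constructor
  · rintro ⟨h1, h2⟩
    refine ⟨fun a => ⟨(h1 a).1, ?_⟩, h2⟩
    calc j a ≤ ∑ i, j i := Finset.single_le_sum (fun i _ => Nat.zero_le _) (mem_univ a)
    _ = k := h2
  · rintro ⟨h1, h2⟩
    exact ⟨fun a => ⟨(h1 a).1, le_trans (h1 a).2 h⟩, h2⟩

lemma TT_zero (k : ℕ) : TT 0 k = if k = 0 then 1 else 0 := by
  unfold TT
  rcases eq_or_ne k 0 with rfl | hk
  · simp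
  · rw [if_neg hk]
    convert Finset.sum_empty
    ext j
    simp [hk.symm]

lemma TT_rec (d k : ℕ) :
    TT (d + 1) k = ∑ v ∈ Finset.Icc 1 k, (Real.sqrt v)⁻¹ * TT d (k - v) := by
  unfold TT
  rw [← Finset.sum_fiberwise_of_maps_to (g := fun j => j 0) (t := Finset.Icc 1 k)
      (fun j hj => by
        simp only [mem_filter, Fintype.mem_piFinset] at hj
        exact hj.1 0)]
  refine Finset.sum_congr rfl fun v hv => ?_
  rw [Finset.mem_Icc] at hv
  rw [← fiber_eq d (k - v) k (Nat.sub_le _ _), Finset.mul_sum]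
  refine Finset.sum_nbij' (fun a => Fin.tail a) (fun b => Fin.cons v b) ?_ ?_ ?_ ?_ ?_
  · intro a ha
    simp only [mem_filter, Fintype.mem_piFinset] at ha ⊢
    obtain ⟨⟨hmem, hsum⟩, h0⟩ := ha
    refine ⟨fun i => hmem i.succ, ?_⟩
    have := Fin.sum_univ_succ a
    rw [hsum, h0] at this
    simp only [Fin.tail]
    omega
  · intro b hb
    simp only [mem_filter, Fintype.mem_piFinset] at hb ⊢
    obtain ⟨hmem, hsum⟩ := hb
    refine ⟨⟨fun i => ?_, ?_⟩, by simp⟩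
    · rcases Fin.eq_zero_or_eq_succ i with rfl | ⟨i', rfl⟩
      · simpa [Finset.mem_Icc] using hv
      · simpa using hmem i'
    · rw [Fin.sum_univ_succ]
      simp only [Fin.cons_zero, Fin.cons_succ]
      rw [hsum]
      omega
  · intro a ha
    simp only [mem_filter] at ha
    rw [← ha.2]
    exact Fin.cons_self_tail a
  · intro b _
    simp [Fin.tail_cons]
  · intro a ha
    simp only [mem_filter] at ha
    have h0 : a 0 = v := ha.2
    rw [Fin.prod_univ_succ]
    push_cast
    rw [h0, Real.sqrt_mul (by positivity), mul_inv]
    rfl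

lemma TT_one (k : ℕ) (hk : 1 ≤ k) : TT 1 k = (Real.sqrt k)⁻¹ := by
  rw [TT_rec]
  rw [Finset.sum_eq_single k]
  · simp [TT_zero]
  · intro v hv hvk
    rw [Finset.mem_Icc] at hv
    rw [TT_zero, if_neg (by omega), mul_zero]
  · intro h
    exact absurd (Finset.mem_Icc.2 ⟨hk, le_rfl⟩) h

lemma sum_split (d n : ℕ) :
    (∑ j ∈ (Fintype.piFinset fun _ : Fin d => Finset.Icc 1 n).filter
        (fun j => ∑ i, j i ≤ n),
      Real.sqrt (∑ i, (j i : ℝ)) / Real.sqrt (∏ i, (j i : ℝ)))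
    = ∑ k ∈ Finset.range (n + 1), Real.sqrt k * TT d k := by
  rw [← Finset.sum_fiberwise_of_maps_to (g := fun j => ∑ i, j i) (t := Finset.range (n + 1))
      (fun j hj => by
        simp only [mem_filter] at hj
        exact Finset.mem_range.2 (Nat.lt_succ_of_le hj.2))]
  refine Finset.sum_congr rfl fun k hk => ?_
  rw [Finset.mem_range] at hk
  have hset : ((Fintype.piFinset fun _ : Fin d => Finset.Icc 1 n).filter
        (fun j => ∑ i, j i ≤ n)).filter (fun j => ∑ i, j i = k)
      = (Fintype.piFinset fun _ : Fin d => Finset.Icc 1 k).filter (fun j => ∑ i, j i = k) := by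
    rw [Finset.filter_filter, ← fiber_eq d k n (by omega)]
    refine Finset.filter_congr fun j _ => ?_
    constructor
    · rintro ⟨_, h⟩; exact h
    · rintro h; exact ⟨h ▸ by omega, h⟩
  rw [hset, TT, Finset.mul_sum]
  refine Finset.sum_congr rfl fun j hj => ?_
  simp only [mem_filter] at hj
  have : (∑ i, (j i : ℝ)) = (k : ℝ) := by
    exact_mod_cast congrArg (Nat.cast : ℕ → ℝ) hj.2
  rw [this, div_eq_mul_inv]

lemma TT_zero' (d : ℕ) (hd : 1 ≤ d) : TT d 0 = 0 := by
  apply Finset.sum_eq_zero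
  intro j hj
  exfalso
  simp only [Finset.mem_filter, Fintype.mem_piFinset, Finset.mem_Icc] at hj
  have := hj.1 ⟨0, by omega⟩
  omega

lemma TT_rec' (d k : ℕ) :
    TT (d + 1) k = ∑ m ∈ Finset.range k, (Real.sqrt ((k - m : ℕ) : ℝ))⁻¹ * TT d m := by
  rw [TT_rec]
  refine Finset.sum_nbij' (fun v => k - v) (fun m => k - m) ?_ ?_ ?_ ?_ ?_
  · intro v hv; rw [Finset.mem_Icc] at hv; rw [Finset.mem_range]; omega
  · intro m hm; rw [Finset.mem_range] at hm; rw [Finset.mem_Icc]; omega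
  · intro v hv; rw [Finset.mem_Icc] at hv; omega
  · intro m hm; rw [Finset.mem_range] at hm; omega
  · intro v hv
    rw [Finset.mem_Icc] at hv
    have h1 : k - (k - v) = v := by omega
    rw [h1]

theorem TT_asymp : ∀ d : ℕ, 1 ≤ d →
    Tendsto (fun k : ℕ => TT d k / (k:ℝ)^((d:ℝ)/2 - 1)) atTop
      (nhds (Real.pi^((d:ℝ)/2) / Real.Gamma ((d:ℝ)/2))) := by
  intro d
  induction d with
  | zero => omega
  | succ d IH =>
    intro _
    rcases Nat.eq_zero_or_pos d with rfl | hd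
    · -- base case : d + 1 = 1
      have hval : Real.pi^(((0+1:ℕ):ℝ)/2) / Real.Gamma (((0+1:ℕ):ℝ)/2) = 1 := by
        norm_num
        rw [Real.Gamma_one_half_eq, Real.sqrt_eq_rpow]
        exact div_self (Real.rpow_pos_of_pos Real.pi_pos _).ne'
      rw [hval]
      apply Tendsto.congr' _ tendsto_const_nhds
      filter_upwards [eventually_ge_atTop 1] with k hk
      have hk' : (0:ℝ) < k := by exact_mod_cast (show 0 < k by omega)
      have he : (((0+1:ℕ):ℝ))/2 - 1 = -(1/2 : ℝ) := by norm_num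
      rw [TT_one k hk, he, Real.sqrt_eq_rpow, Real.rpow_neg hk'.le]
      exact (div_self (inv_ne_zero (Real.rpow_pos_of_pos hk' _).ne')).symm
    · -- inductive step
      have IH' := IH hd
      set a : ℝ := (d:ℝ)/2 with haDef
      have ha0 : (0:ℝ) < a := by
        rw [haDef]
        have : (1:ℝ) ≤ d := by exact_mod_cast hd
        linarith
      have ha : a = 1/2 ∨ 1 ≤ a := by
        rcases Nat.lt_or_ge d 2 with h | h
        · left
          have hd1 : d = 1 := by omega
          rw [haDef, hd1]
          norm_num
        · right
          rw [haDef]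
          have : (2:ℝ) ≤ d := by exact_mod_cast h
          linarith
      have ha12 : (1/2 : ℝ) ≤ a := by
        rcases ha with h | h
        · exact h.ge
        · linarith
      have hB := beta_sum_lim a ha
      set L : ℝ := Real.pi^a / Real.Gamma a with hLdef
      have IH2 : Tendsto (fun m : ℕ => TT d m / (m:ℝ)^(a-1)) atTop (nhds L) := IH'
      set e : ℕ → ℝ := fun m => |TT d m / (m:ℝ)^(a-1) - L| with heDef
      have he : Tendsto e atTop (nhds 0) := by
        have := (IH2.sub (tendsto_const_nhds (x := L))).abs
        simpa using this
      set w : ℕ → ℕ → ℝ := fun n m =>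
        if 1 ≤ m then ((n:ℝ)-m)^(-(1/2):ℝ) * (m:ℝ)^(a-1) / (n:ℝ)^(a-1/2) else 0 with hwDef
      have hw : ∀ n, ∀ m ∈ Finset.range n, 0 ≤ w n m := by
        intro n m hm
        rw [Finset.mem_range] at hm
        simp only [hwDef]
        split
        · apply div_nonneg _ (Real.rpow_nonneg (Nat.cast_nonneg n) _)
          apply mul_nonneg (Real.rpow_nonneg ?_ _) (Real.rpow_nonneg (Nat.cast_nonneg m) _)
          have : (m:ℝ) < n := by exact_mod_cast hm
          linarith
        · exact le_rfl
      have hwk : ∀ m, Tendsto (fun n => w n m) atTop (nhds 0) := by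
        intro m
        rcases Nat.eq_zero_or_pos m with rfl | hm
        · have hzz : (fun n : ℕ => w n 0) = fun _ => (0:ℝ) := by
            funext n
            simp [hwDef]
          rw [hzz]
          exact tendsto_const_nhds
        · have h1 : Tendsto (fun n : ℕ => (n:ℝ) - m) atTop atTop := by
            have := tendsto_atTop_add_const_right atTop (-(m:ℝ))
              (tendsto_natCast_atTop_atTop (R := ℝ))
            apply this.congr
            intro n
            rw [sub_eq_add_neg]
          have hX : Tendsto (fun n : ℕ => ((n:ℝ)-m)^(-(1/2):ℝ) * (m:ℝ)^(a-1)) atTop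
              (nhds 0) := by
            have h2 := (tendsto_rpow_neg_atTop (by norm_num : (0:ℝ) < 1/2)).comp h1
            simpa using h2.mul_const ((m:ℝ)^(a-1))
          apply squeeze_zero_norm' _ hX
          filter_upwards [eventually_ge_atTop (m+1)] with n hn
          have hmn : (m:ℝ) < n := by exact_mod_cast hn
          have hw0 : 0 ≤ w n m := hw n m (Finset.mem_range.mpr (by omega))
          rw [Real.norm_eq_abs, abs_of_nonneg hw0]
          simp only [hwDef]
          rw [if_pos (show 1 ≤ m by omega)]
          apply div_le_self
          · exact mul_nonneg (Real.rpow_nonneg (by linarith) _)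
              (Real.rpow_nonneg (Nat.cast_nonneg m) _)
          · have hn1 : (1:ℝ) ≤ n := by
              have : (1:ℕ) ≤ n := by omega
              exact_mod_cast this
            calc (1:ℝ) = (n:ℝ)^(0:ℝ) := (Real.rpow_zero _).symm
              _ ≤ (n:ℝ)^(a - 1/2) :=
                Real.rpow_le_rpow_of_exponent_le hn1 (by linarith)
      have hwsum : ∀ n : ℕ, ∑ m ∈ Finset.range n, w n m
          = (∑ m ∈ Finset.Ico 1 n, (m:ℝ)^(a-1) * ((n:ℝ)-(m:ℝ))^(-(1/2):ℝ)) / (n:ℝ)^(a-1/2) := by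
        intro n
        rcases Nat.eq_zero_or_pos n with rfl | hn
        · simp
        · rw [Finset.range_eq_Ico, Finset.sum_eq_sum_Ico_succ_bot hn]
          simp only [hwDef]
          rw [if_neg (by omega), zero_add, Finset.sum_div]
          apply Finset.sum_congr rfl
          intro m hm
          rw [Finset.mem_Ico] at hm
          rw [if_pos hm.1]
          ring
      obtain ⟨C, hCmem⟩ := hB.bddAbove_range
      have hC : ∀ n, ∑ m ∈ Finset.range n, w n m ≤ C := by
        intro n
        rw [hwsum n]
        exact hCmem (Set.mem_range_self n)
      have hE := weighted_null w e C hw hwk hC (fun m => abs_nonneg _) he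
      have key : ∀ᶠ n : ℕ in atTop,
          ‖TT (d+1) n / (n:ℝ)^(a-1/2)
            - L * ((∑ m ∈ Finset.Ico 1 n,
                (m:ℝ)^(a-1) * ((n:ℝ)-(m:ℝ))^(-(1/2):ℝ)) / (n:ℝ)^(a-1/2))‖
          ≤ ∑ m ∈ Finset.range n, w n m * e m := by
        filter_upwards [eventually_ge_atTop 1] with n hn
        have hn' : (0:ℝ) < n := by exact_mod_cast (show 0 < n by omega)
        have hD : (0:ℝ) < (n:ℝ)^(a-1/2) := Real.rpow_pos_of_pos hn' _
        have key1 : TT (d+1) n = ∑ m ∈ Finset.Ico 1 n, ((n:ℝ)-m)^(-(1/2):ℝ) * TT d m := by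
          rw [TT_rec', Finset.range_eq_Ico, Finset.sum_eq_sum_Ico_succ_bot (by omega : 0 < n),
            TT_zero' d hd, mul_zero, zero_add]
          apply Finset.sum_congr rfl
          intro m hm
          rw [Finset.mem_Ico] at hm
          congr 1
          rw [Nat.cast_sub (by omega), Real.sqrt_eq_rpow,
            ← Real.rpow_neg (by
              have : (m:ℝ) < n := by exact_mod_cast hm.2
              linarith)]
        have hdiff : TT (d+1) n / (n:ℝ)^(a-1/2)
            - L * ((∑ m ∈ Finset.Ico 1 n,
                (m:ℝ)^(a-1) * ((n:ℝ)-(m:ℝ))^(-(1/2):ℝ)) / (n:ℝ)^(a-1/2))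
            = (∑ m ∈ Finset.Ico 1 n,
                ((n:ℝ)-m)^(-(1/2):ℝ) * (TT d m - L * (m:ℝ)^(a-1))) / (n:ℝ)^(a-1/2) := by
          rw [key1, ← mul_div_assoc, Finset.mul_sum, div_sub_div_same,
            ← Finset.sum_sub_distrib]
          congr 1
          apply Finset.sum_congr rfl
          intro m hm
          ring
        rw [Real.norm_eq_abs, hdiff, abs_div, abs_of_nonneg hD.le, div_le_iff₀ hD]
        calc |∑ m ∈ Finset.Ico 1 n, ((n:ℝ)-m)^(-(1/2):ℝ) * (TT d m - L * (m:ℝ)^(a-1))|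
            ≤ ∑ m ∈ Finset.Ico 1 n,
              |((n:ℝ)-m)^(-(1/2):ℝ) * (TT d m - L * (m:ℝ)^(a-1))| :=
              Finset.abs_sum_le_sum_abs _ _
          _ = ∑ m ∈ Finset.Ico 1 n, ((n:ℝ)-m)^(-(1/2):ℝ) * ((m:ℝ)^(a-1) * e m) := by
              apply Finset.sum_congr rfl
              intro m hm
              rw [Finset.mem_Ico] at hm
              have hm1 : (0:ℝ) < m := by exact_mod_cast hm.1
              have hmn : (m:ℝ) < n := by exact_mod_cast hm.2
              have hMpos : (0:ℝ) < (m:ℝ)^(a-1) := Real.rpow_pos_of_pos hm1 _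
              have hfac : TT d m - L * (m:ℝ)^(a-1)
                  = (m:ℝ)^(a-1) * (TT d m / (m:ℝ)^(a-1) - L) := by
                field_simp
                try ring
              rw [abs_mul, abs_of_nonneg (Real.rpow_nonneg (by linarith) _), hfac, abs_mul,
                abs_of_nonneg hMpos.le]
          _ = (∑ m ∈ Finset.range n, w n m * e m) * (n:ℝ)^(a-1/2) := by
              rw [Finset.sum_mul, Finset.range_eq_Ico,
                Finset.sum_eq_sum_Ico_succ_bot (by omega : 0 < n)]
              simp only [hwDef]
              rw [if_neg (by omega), zero_mul, zero_mul, zero_add]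
              apply Finset.sum_congr rfl
              intro m hm
              rw [Finset.mem_Ico] at hm
              rw [if_pos hm.1]
              field_simp
      have h2 : Tendsto (fun n : ℕ => TT (d+1) n / (n:ℝ)^(a-1/2)
          - L * ((∑ m ∈ Finset.Ico 1 n,
              (m:ℝ)^(a-1) * ((n:ℝ)-(m:ℝ))^(-(1/2):ℝ)) / (n:ℝ)^(a-1/2))) atTop (nhds 0) :=
        squeeze_zero_norm' key hE
      have h3 := h2.add (hB.const_mul L)
      have final : Tendsto (fun n : ℕ => TT (d+1) n / (n:ℝ)^(a-1/2)) atTop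
          (nhds (L * (Real.Gamma a * Real.Gamma (1/2) / Real.Gamma (a + 1/2)))) := by
        simpa using h3
      have hexp : ∀ n : ℕ, ((n:ℝ))^(((d+1:ℕ):ℝ)/2 - 1) = (n:ℝ)^(a - 1/2) := by
        intro n
        congr 1
        rw [haDef]
        push_cast
        ring
      have hvv : Real.pi^(((d+1:ℕ):ℝ)/2) / Real.Gamma (((d+1:ℕ):ℝ)/2)
          = L * (Real.Gamma a * Real.Gamma (1/2) / Real.Gamma (a + 1/2)) := by
        have h5 : ((d+1:ℕ):ℝ)/2 = a + 1/2 := by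
          rw [haDef]
          push_cast
          ring
        rw [h5, hLdef]
        have hGa : Real.Gamma a ≠ 0 := (Real.Gamma_pos_of_pos ha0).ne'
        have hGa2 : Real.Gamma (a + 1/2) ≠ 0 :=
          (Real.Gamma_pos_of_pos (by linarith)).ne'
        have hpi : Real.pi^(a + 1/2 : ℝ) = Real.pi^a * Real.pi^((1/2):ℝ) :=
          Real.rpow_add Real.pi_pos _ _
        rw [hpi, Real.Gamma_one_half_eq, Real.sqrt_eq_rpow]
        field_simp
      rw [hvv]
      apply Tendsto.congr _ final
      intro n
      rw [hexp n]

lemma pow_sum_lim (p : ℝ) (hp : 0 ≤ p) :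
    Tendsto (fun n : ℕ => (∑ k ∈ Finset.Ico 1 (n+1), (k:ℝ)^p)/(n:ℝ)^(p+1)) atTop
      (nhds (1/(p+1))) := by
  have hp1 : (0:ℝ) < p + 1 := by linarith
  have hfn : ∀ n : ℕ, 1 ≤ n → (∑ k ∈ Finset.Ico 1 (n+1), (k:ℝ)^p)/(n:ℝ)^(p+1)
      = (∑ k ∈ Finset.Ico 1 (n+1), ((k:ℝ)/(n:ℝ))^p)/(n:ℝ) := by
    intro n hn
    have hn' : (0:ℝ) < n := by exact_mod_cast (show 0 < n by omega)
    rw [Finset.sum_div, Finset.sum_div]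
    apply Finset.sum_congr rfl
    intro k _
    rw [Real.div_rpow (Nat.cast_nonneg k) hn'.le, div_div]
    congr 1
    rw [Real.rpow_add hn', Real.rpow_one]
  apply tendsto_of_tendsto_of_tendsto_of_le_of_le' (g := fun _ : ℕ => 1/(p+1))
    (h := fun n : ℕ => (((n:ℝ)+1)/(n:ℝ))^(p+1)/(p+1))
  · exact tendsto_const_nhds
  · have h1 : Tendsto (fun n : ℕ => ((n:ℝ)+1)/(n:ℝ)) atTop (nhds 1) := by
      have h0 := (tendsto_const_nhds (x := (1:ℝ)) (f := atTop (α := ℕ))).add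
        tendsto_one_div_atTop_nhds_zero_nat
      rw [add_zero] at h0
      apply Tendsto.congr' _ h0
      filter_upwards [eventually_ge_atTop 1] with n hn
      have hn' : (0:ℝ) < n := by exact_mod_cast (show 0 < n by omega)
      field_simp
    have h2 := h1.rpow_const (p := p+1) (Or.inl one_ne_zero)
    rw [Real.one_rpow] at h2
    simpa using h2.div_const (p+1)
  · filter_upwards [eventually_ge_atTop 1] with n hn
    have hn0 : 0 < n := by omega
    have hn' : (0:ℝ) < n := by exact_mod_cast hn0
    rw [hfn n hn]
    have key := integral_le_sum_div (fun x => x^p) (n := n) (a := 1) (b := n+1) (-1) hn0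
      (by omega)
      (fun m h1 h2 => intervalIntegrable_rpow' (by linarith))
      (fun m h1 h2 x hx => by
        have hm1 : (1:ℝ) ≤ m := by exact_mod_cast h1
        have hx1 : 0 ≤ x := by
          have := hx.1
          have h0 : (0:ℝ) ≤ ((m:ℝ) + (-1))/n := by
            apply div_nonneg _ hn'.le
            linarith
          linarith
        have hx2 : x ≤ (m:ℝ)/n := by
          have := hx.2
          have he : ((m:ℝ) + 1 + (-1))/n = (m:ℝ)/n := by ring
          rw [he] at this
          exact this
        exact Real.rpow_le_rpow hx1 hx2 hp)
    have e1 : (((1:ℕ):ℝ) + (-1))/(n:ℝ) = 0 := by push_cast; ring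
    have e2 : (((n+1:ℕ):ℝ) + (-1))/(n:ℝ) = 1 := by
      push_cast
      field_simp
      ring
    rw [e1, e2, integral_rpow (Or.inl (by linarith))] at key
    rw [Real.one_rpow, Real.zero_rpow hp1.ne'] at key
    calc (1:ℝ)/(p+1) = (1 - 0)/(p+1) := by norm_num
      _ ≤ _ := key
  · filter_upwards [eventually_ge_atTop 1] with n hn
    have hn0 : 0 < n := by omega
    have hn' : (0:ℝ) < n := by exact_mod_cast hn0
    rw [hfn n hn]
    have key := sum_div_le_integral (fun x => x^p) (n := n) (a := 1) (b := n+1) 0 hn0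
      (by omega)
      (fun m h1 h2 => intervalIntegrable_rpow' (by linarith))
      (fun m h1 h2 x hx => by
        have hm1 : (1:ℝ) ≤ m := by exact_mod_cast h1
        have hx1 : (m:ℝ)/n ≤ x := by
          have := hx.1
          have he : ((m:ℝ) + 0)/n = (m:ℝ)/n := by ring
          rw [he] at this
          exact this
        exact Real.rpow_le_rpow (by positivity) hx1 hp)
    have e1 : (((1:ℕ):ℝ) + 0)/(n:ℝ) = 1/(n:ℝ) := by push_cast; ring
    have e2 : (((n+1:ℕ):ℝ) + 0)/(n:ℝ) = ((n:ℝ)+1)/(n:ℝ) := by push_cast; ring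
    rw [e1, e2, integral_rpow (Or.inl (by linarith))] at key
    calc (∑ k ∈ Finset.Ico 1 (n+1), ((k:ℝ)/(n:ℝ))^p)/(n:ℝ)
        ≤ ((((n:ℝ)+1)/(n:ℝ))^(p+1) - (1/(n:ℝ))^(p+1))/(p+1) := key
      _ ≤ (((n:ℝ)+1)/(n:ℝ))^(p+1)/(p+1) := by
          apply (div_le_div_iff_of_pos_right hp1).mpr
          have : (0:ℝ) ≤ (1/(n:ℝ))^(p+1) := Real.rpow_nonneg (by positivity) _
          linarith


/-- For `a_n = Σ_{j_1+⋯+j_d ≤ n, j_i ≥ 1} √(j_1+⋯+j_d)/√(j_1⋯j_d)`, one has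
`lim_n a_n / n^{(d+1)/2} = 2π^{d/2} / ((d+1) Γ(d/2))`. -/
theorem sum_sqrt_ratio_limit (d : ℕ) (hd : 1 ≤ d) :
    Tendsto (fun n : ℕ =>
        (∑ j ∈ (Fintype.piFinset fun _ : Fin d => Finset.Icc 1 n).filter
            (fun j => ∑ i, j i ≤ n),
          Real.sqrt (∑ i, (j i : ℝ)) / Real.sqrt (∏ i, (j i : ℝ))) /
        (n : ℝ) ^ (((d : ℝ) + 1) / 2))
      atTop
      (nhds (2 * Real.pi ^ ((d : ℝ) / 2) / (((d : ℝ) + 1) * Real.Gamma ((d : ℝ) / 2)))) := by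
  have hdR : (1:ℝ) ≤ (d:ℝ) := by exact_mod_cast hd
  set q : ℝ := (d:ℝ)/2 - 1 with hqDef
  set p : ℝ := q + 1/2 with hpDef
  have hp0 : 0 ≤ p := by rw [hpDef, hqDef]; linarith
  have hp1 : (0:ℝ) < p + 1 := by linarith
  set L : ℝ := Real.pi^((d:ℝ)/2) / Real.Gamma ((d:ℝ)/2) with hLdef
  have hT' : Tendsto (fun k : ℕ => TT d k / (k:ℝ)^q) atTop (nhds L) := TT_asymp d hd
  have hP := pow_sum_lim p hp0
  set e : ℕ → ℝ := fun k => |TT d k / (k:ℝ)^q - L| with heDef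
  have he : Tendsto e atTop (nhds 0) := by
    simpa using (hT'.sub (tendsto_const_nhds (x := L))).abs
  set w : ℕ → ℕ → ℝ := fun n k => if 1 ≤ k then (k:ℝ)^p/(n:ℝ)^(p+1) else 0 with hwDef
  have hw : ∀ n k, 0 ≤ w n k := by
    intro n k
    simp only [hwDef]
    split
    · positivity
    · exact le_rfl
  have hwsum : ∀ n : ℕ, ∑ k ∈ Finset.range (n+1), w n k
      = (∑ k ∈ Finset.Ico 1 (n+1), (k:ℝ)^p)/(n:ℝ)^(p+1) := by
    intro n
    rw [Finset.range_eq_Ico, Finset.sum_eq_sum_Ico_succ_bot (by omega : 0 < n+1)]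
    simp only [hwDef]
    rw [if_neg (by omega), zero_add, Finset.sum_div]
    apply Finset.sum_congr rfl
    intro k hk
    rw [Finset.mem_Ico] at hk
    rw [if_pos hk.1]
  obtain ⟨C0, hC0⟩ := hP.bddAbove_range
  set C : ℝ := max C0 0 with hCdef
  have hC : ∀ n, ∑ k ∈ Finset.range (n+1), w n k ≤ C := by
    intro n
    rw [hwsum]
    exact le_trans (hC0 (Set.mem_range_self n)) (le_max_left _ _)
  have hwk : ∀ k, Tendsto (fun n => w n k) atTop (nhds 0) := by
    intro k
    rcases Nat.eq_zero_or_pos k with rfl | hk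
    · have hzz : (fun n : ℕ => w n 0) = fun _ => (0:ℝ) := by
        funext n
        simp [hwDef]
      rw [hzz]
      exact tendsto_const_nhds
    · have hX : Tendsto (fun n : ℕ => (k:ℝ)^p * (n:ℝ)^(-(p+1))) atTop (nhds 0) := by
        have h1 := (tendsto_rpow_neg_atTop hp1).comp (tendsto_natCast_atTop_atTop (R := ℝ))
        simpa using h1.const_mul ((k:ℝ)^p)
      apply Tendsto.congr' _ hX
      filter_upwards [eventually_ge_atTop 1] with n hn
      have hn' : (0:ℝ) < n := by exact_mod_cast (show 0 < n by omega)
      simp only [hwDef]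
      rw [if_pos (show 1 ≤ k by omega), Real.rpow_neg hn'.le, div_eq_mul_inv]
  have hG : Tendsto (fun m : ℕ => ∑ k ∈ Finset.range m, w (m-1) k * e k) atTop (nhds 0) := by
    apply weighted_null (fun m k => w (m-1) k) e C
    · intro n k _
      exact hw _ _
    · intro k
      exact (hwk k).comp (tendsto_sub_atTop_nat 1)
    · intro m
      rcases Nat.eq_zero_or_pos m with rfl | hm
      · simpa [hCdef] using le_max_right C0 0
      · obtain ⟨m', rfl⟩ : ∃ m', m = m'+1 := ⟨m-1, by omega⟩
        simpa using hC m'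
    · exact fun k => abs_nonneg _
    · exact he
  have hE : Tendsto (fun n : ℕ => ∑ k ∈ Finset.range (n+1), w n k * e k) atTop (nhds 0) := by
    have := hG.comp (tendsto_add_atTop_nat 1)
    simpa [Function.comp_def] using this
  set S : ℕ → ℝ := fun n => ∑ k ∈ Finset.Ico 1 (n+1), Real.sqrt k * TT d k with hSdef
  have key : ∀ᶠ n : ℕ in atTop,
      ‖S n/(n:ℝ)^(p+1)
        - L * ((∑ k ∈ Finset.Ico 1 (n+1), (k:ℝ)^p)/(n:ℝ)^(p+1))‖
      ≤ ∑ k ∈ Finset.range (n+1), w n k * e k := by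
    filter_upwards [eventually_ge_atTop 1] with n hn
    have hn' : (0:ℝ) < n := by exact_mod_cast (show 0 < n by omega)
    have hD : (0:ℝ) < (n:ℝ)^(p+1) := Real.rpow_pos_of_pos hn' _
    have hdiff : S n/(n:ℝ)^(p+1)
        - L * ((∑ k ∈ Finset.Ico 1 (n+1), (k:ℝ)^p)/(n:ℝ)^(p+1))
        = (∑ k ∈ Finset.Ico 1 (n+1),
            (Real.sqrt k * TT d k - L * (k:ℝ)^p))/(n:ℝ)^(p+1) := by
      simp only [hSdef]
      rw [← mul_div_assoc, Finset.mul_sum, div_sub_div_same, ← Finset.sum_sub_distrib]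
    rw [Real.norm_eq_abs, hdiff, abs_div, abs_of_nonneg hD.le, div_le_iff₀ hD]
    calc |∑ k ∈ Finset.Ico 1 (n+1), (Real.sqrt k * TT d k - L * (k:ℝ)^p)|
        ≤ ∑ k ∈ Finset.Ico 1 (n+1), |Real.sqrt k * TT d k - L * (k:ℝ)^p| :=
          Finset.abs_sum_le_sum_abs _ _
      _ = ∑ k ∈ Finset.Ico 1 (n+1), (k:ℝ)^p * e k := by
          apply Finset.sum_congr rfl
          intro k hk
          rw [Finset.mem_Ico] at hk
          have hk' : (0:ℝ) < k := by exact_mod_cast hk.1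
          have hkq : (0:ℝ) < (k:ℝ)^q := Real.rpow_pos_of_pos hk' _
          have hfac : Real.sqrt k * TT d k - L * (k:ℝ)^p
              = (k:ℝ)^((1/2):ℝ) * ((k:ℝ)^q * (TT d k/(k:ℝ)^q - L)) := by
            rw [Real.sqrt_eq_rpow, hpDef, Real.rpow_add hk']
            field_simp
          rw [hfac, abs_mul, abs_mul, abs_of_nonneg (Real.rpow_nonneg hk'.le _),
            abs_of_nonneg hkq.le, hpDef, Real.rpow_add hk']
          try ring
      _ = (∑ k ∈ Finset.range (n+1), w n k * e k) * (n:ℝ)^(p+1) := by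
          rw [Finset.sum_mul, Finset.range_eq_Ico,
            Finset.sum_eq_sum_Ico_succ_bot (by omega : 0 < n+1)]
          simp only [hwDef]
          rw [if_neg (by omega), zero_mul, zero_mul, zero_add]
          apply Finset.sum_congr rfl
          intro k hk
          rw [Finset.mem_Ico] at hk
          rw [if_pos hk.1]
          field_simp
          try ring
  have h2 : Tendsto (fun n : ℕ => S n/(n:ℝ)^(p+1)
      - L * ((∑ k ∈ Finset.Ico 1 (n+1), (k:ℝ)^p)/(n:ℝ)^(p+1))) atTop (nhds 0) :=
    squeeze_zero_norm' key hE
  have h3 := h2.add (hP.const_mul L)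
  have final : Tendsto (fun n : ℕ => S n/(n:ℝ)^(p+1)) atTop (nhds (L * (1/(p+1)))) := by
    simpa using h3
  have hsum : ∀ n : ℕ,
      (∑ j ∈ (Fintype.piFinset fun _ : Fin d => Finset.Icc 1 n).filter
          (fun j => ∑ i, j i ≤ n),
        Real.sqrt (∑ i, (j i : ℝ)) / Real.sqrt (∏ i, (j i : ℝ))) = S n := by
    intro n
    rw [sum_split d n, Finset.range_eq_Ico,
      Finset.sum_eq_sum_Ico_succ_bot (by omega : 0 < n+1)]
    simp only [hSdef]
    norm_num
  have hexp : ∀ n : ℕ, ((n:ℝ))^(((d:ℝ)+1)/2) = (n:ℝ)^(p+1) := by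
    intro n
    congr 1
    rw [hpDef, hqDef]
    ring
  have hΓ : Real.Gamma ((d:ℝ)/2) ≠ 0 :=
    (Real.Gamma_pos_of_pos (by linarith : (0:ℝ) < (d:ℝ)/2)).ne'
  have hval : 2 * Real.pi^((d:ℝ)/2) / (((d:ℝ)+1) * Real.Gamma ((d:ℝ)/2))
      = L * (1/(p+1)) := by
    have hp1' : p + 1 = ((d:ℝ)+1)/2 := by rw [hpDef, hqDef]; ring
    rw [hp1', hLdef, one_div_div, div_mul_div_comm,
      mul_comm (Real.Gamma ((d:ℝ)/2)) ((d:ℝ)+1), mul_comm (Real.pi ^ ((d:ℝ)/2)) (2:ℝ)]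
  rw [hval]
  apply Tendsto.congr _ final
  intro n
  rw [hsum n, hexp n]
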